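/- Let H be a Hopf algebra with bijective antipode and let M be an algebra which is a left H-comodule. Suppose π: H → M is a surjective algebra homomorphism such that the action hm := π(h)m makes M a left-left anti-Yetter-Drinfeld module, and suppose π(1^{(-1)}) 1^{(0)} = 1, where m ↦ m^{(-1)} ⊗ m^{(0)} denotes the coaction applied to the unit 1 of M. Then M is stable, i.e., m^{(-1)} m^{(0)} = m for all m ∈ M. -/

import Mathlib

open TensorProduct

namespace HC

variable {k : Type} [Field k]
variable {H : Type} [Ring H] [Algebra k H]
variable {M : Type} [AddCommGroup M] [Module k M]

/-- Coassociativity and counitality of a left coaction. -/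
def IsLCoact (Δ : H →ₗ[k] H ⊗[k] H) (ε : H →ₗ[k] k)
    (coact : M →ₗ[k] H ⊗[k] M) : Prop :=
  ((TensorProduct.map Δ LinearMap.id) ∘ₗ coact =
    ((TensorProduct.assoc k H H M).symm.toLinearMap) ∘ₗ
      (TensorProduct.map LinearMap.id coact) ∘ₗ coact) ∧
  (∀ m : M, (TensorProduct.lid k M) ((TensorProduct.map ε LinearMap.id) (coact m)) = m)

/-- The left-left anti-Yetter-Drinfeld condition. -/
def AYDll (Δ : H →ₗ[k] H ⊗[k] H) (Sinv : H →ₗ[k] H)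
    (act : H →ₗ[k] M →ₗ[k] M) (coact : M →ₗ[k] H ⊗[k] M) : Prop :=
  ∀ (h : H) (m : M) (s : Finset ℕ) (a b : ℕ → H)
    (t : ℕ → Finset ℕ) (c d : ℕ → ℕ → H)
    (u : Finset ℕ) (e : ℕ → H) (m0 : ℕ → M),
    Δ h = ∑ i ∈ s, a i ⊗ₜ b i →
    (∀ i ∈ s, Δ (b i) = ∑ j ∈ t i, c i j ⊗ₜ d i j) →
    coact m = ∑ l ∈ u, e l ⊗ₜ m0 l →
    coact (act h m) = ∑ i ∈ s, ∑ j ∈ t i, ∑ l ∈ u,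
      (a i * e l * Sinv (d i j)) ⊗ₜ act (c i j) (m0 l)

/-- Stability: `action ∘ coaction = id`, i.e. `m⁽⁻¹⁾ m⁽⁰⁾ = m`. -/
def StableL (act : H →ₗ[k] M →ₗ[k] M) (coact : M →ₗ[k] H ⊗[k] M) : Prop :=
  ∀ (m : M) (u : Finset ℕ) (e : ℕ → H) (m0 : ℕ → M),
    coact m = ∑ l ∈ u, e l ⊗ₜ m0 l →
    ∑ l ∈ u, act (e l) (m0 l) = m

end HC

open HC TensorProduct

section Helpers
variable {k : Type} [Field k]

lemma list_sum_range {A C : Type} [AddCommMonoid C] (L : List A) (d : A) (f : A → C) :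
    ∑ i ∈ Finset.range L.length, f (L.getD i d) = (L.map f).sum := by
  induction L with
  | nil => simp
  | cons a tl ih =>
    rw [List.length_cons, Finset.sum_range_succ']
    simp only [List.getD_cons_succ, List.getD_cons_zero, ih, List.map_cons, List.sum_cons]
    exact add_comm _ _

lemma exists_rep {A B : Type} [AddCommGroup A] [Module k A]
    [AddCommGroup B] [Module k B] (x : A ⊗[k] B) :
    ∃ (u : Finset ℕ) (e : ℕ → A) (f : ℕ → B), x = ∑ l ∈ u, e l ⊗ₜ f l := by
  obtain ⟨S, hS⟩ := TensorProduct.exists_finset x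
  refine ⟨Finset.range S.toList.length, fun i => (S.toList.getD i (0,0)).1,
    fun i => (S.toList.getD i (0,0)).2, ?_⟩
  have : ∑ i ∈ Finset.range S.toList.length,
      (S.toList.getD i (0,0)).1 ⊗ₜ[k] (S.toList.getD i (0,0)).2
      = (S.toList.map (fun p => p.1 ⊗ₜ[k] p.2)).sum :=
    list_sum_range S.toList (0,0) (fun p => p.1 ⊗ₜ[k] p.2)
  rw [this]
  rw [hS, Finset.sum_eq_multiset_sum, ← Multiset.sum_toList]
  refine List.Perm.sum_eq (Multiset.coe_eq_coe.mp ?_)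
  rw [Multiset.coe_toList, ← Multiset.map_coe, Finset.coe_toList]

variable {H : Type} [Ring H] [HopfAlgebra k H]

local notation "S'" => HopfAlgebra.antipode (R := k) (A := H)
local notation "Δ" => Coalgebra.comul (R := k) (A := H)
local notation "ε" => Coalgebra.counit (R := k) (A := H)

lemma counit_right_sum (a : H) {s : Finset ℕ} {e f : ℕ → H}
    (h : Δ a = ∑ i ∈ s, e i ⊗ₜ f i) : ∑ i ∈ s, ε (f i) • e i = a := by
  have h1 := Coalgebra.lTensor_counit_comul (R := k) a
  rw [h, map_sum] at h1
  have h2 := congrArg (TensorProduct.rid k H) h1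
  simpa [TensorProduct.rid_tmul] using h2

lemma counit_left_sum (a : H) {s : Finset ℕ} {e f : ℕ → H}
    (h : Δ a = ∑ i ∈ s, e i ⊗ₜ f i) : ∑ i ∈ s, ε (e i) • f i = a := by
  have h1 := Coalgebra.rTensor_counit_comul (R := k) a
  rw [h, map_sum] at h1
  have h2 := congrArg (TensorProduct.lid k H) h1
  simpa [TensorProduct.lid_tmul] using h2

lemma antipode_left_sum (x : H) {s : Finset ℕ} {e f : ℕ → H}
    (h : Δ x = ∑ i ∈ s, e i ⊗ₜ f i) :
    ∑ i ∈ s, S' (e i) * f i = ε x • 1 :=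
  HopfAlgebra.sum_antipode_mul_eq_smul (⟨s, e, f, h.symm⟩ : Coalgebra.Repr k x ℕ)

lemma antipode_right_sum (x : H) {s : Finset ℕ} {e f : ℕ → H}
    (h : Δ x = ∑ i ∈ s, e i ⊗ₜ f i) :
    ∑ i ∈ s, e i * S' (f i) = ε x • 1 :=
  HopfAlgebra.sum_mul_antipode_eq_smul (⟨s, e, f, h.symm⟩ : Coalgebra.Repr k x ℕ)

lemma antipode_left_sum2 (x : H) {t : Finset ℕ} {r : ℕ → Finset ℕ} {e f : ℕ → ℕ → H}
    (h : Δ x = ∑ j ∈ t, ∑ q ∈ r j, e j q ⊗ₜ f j q) :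
    ∑ j ∈ t, ∑ q ∈ r j, S' (e j q) * f j q = ε x • 1 := by
  have h' : Δ x = ∑ p ∈ t.sigma r, e p.1 p.2 ⊗ₜ[k] f p.1 p.2 := by
    rw [h, Finset.sum_sigma]
  have := HopfAlgebra.sum_antipode_mul_eq_smul
    (⟨t.sigma r, fun p => e p.1 p.2, fun p => f p.1 p.2, h'.symm⟩ : Coalgebra.Repr k x ((_ : ℕ) × ℕ))
  rw [Finset.sum_sigma] at this
  exact this

lemma antipode_one' : S' (1 : H) = 1 := by
  have h := HopfAlgebra.mul_antipode_rTensor_comul_apply (R := k) (a := (1:H))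
  simpa [Algebra.TensorProduct.one_def] using h

lemma comul_prod_sum (a b : H) {s p : Finset ℕ} {e f u v : ℕ → H}
    (ha : Δ a = ∑ i ∈ s, e i ⊗ₜ f i) (hb : Δ b = ∑ i ∈ p, u i ⊗ₜ v i) :
    Δ (a * b) = ∑ i ∈ s, ∑ j ∈ p, (e i * u j) ⊗ₜ[k] (f i * v j) := by
  rw [Bialgebra.comul_mul, ha, hb, Finset.sum_mul_sum]
  simp [Algebra.TensorProduct.tmul_mul_tmul]


noncomputable def Np (k : Type) [Field k] (H : Type) [Ring H] [HopfAlgebra k H] :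
    ((H ⊗[k] (H ⊗[k] H)) ⊗[k] (H ⊗[k] (H ⊗[k] H))) →ₗ[k] H :=
  (LinearMap.mul' k H) ∘ₗ (LinearMap.lTensor H (LinearMap.mul' k H)) ∘ₗ
    (TensorProduct.map (HopfAlgebra.antipode (R := k) (A := H) ∘ₗ LinearMap.mul' k H)
      ((TensorProduct.map (LinearMap.mul' k H)
        (LinearMap.mul' k H ∘ₗ (TensorProduct.comm k H H).toLinearMap ∘ₗ
          TensorProduct.map (HopfAlgebra.antipode (R := k) (A := H))
            (HopfAlgebra.antipode (R := k) (A := H)))) ∘ₗ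
        (TensorProduct.tensorTensorTensorComm k H H H H).toLinearMap)) ∘ₗ
    (TensorProduct.tensorTensorTensorComm k H (H ⊗[k] H) H (H ⊗[k] H)).toLinearMap

lemma Np_tmul (x y z u v w : H) :
    Np k H ((x ⊗ₜ (y ⊗ₜ z)) ⊗ₜ (u ⊗ₜ (v ⊗ₜ w))) =
      S' (x * u) * ((y * v) * (S' w * S' z)) := by
  simp [Np]


theorem antipode_mul' (a b : H) : S' (a * b) = S' b * S' a := by
  obtain ⟨sa, x1, x2, hxa⟩ := exists_rep (Δ a)
  obtain ⟨sb, u1, u2, hub⟩ := exists_rep (Δ b)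
  choose ta y1 y2 hy using fun i => exists_rep (Δ (x2 i))
  choose ta' w1 w2 hw using fun i => exists_rep (Δ (x1 i))
  choose tb v1 v2 hv using fun p => exists_rep (Δ (u2 p))
  choose tb' z1 z2 hz using fun p => exists_rep (Δ (u1 p))
  have hLa : (Coalgebra.comul (R := k) (A := H)).lTensor H (Δ a)
      = ∑ i ∈ sa, ∑ j ∈ ta i, x1 i ⊗ₜ[k] (y1 i j ⊗ₜ[k] y2 i j) := by
    rw [hxa, map_sum]
    refine Finset.sum_congr rfl fun i _ => ?_
    rw [LinearMap.lTensor_tmul, hy i, tmul_sum]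
  have hLb : (Coalgebra.comul (R := k) (A := H)).lTensor H (Δ b)
      = ∑ p ∈ sb, ∑ q ∈ tb p, u1 p ⊗ₜ[k] (v1 p q ⊗ₜ[k] v2 p q) := by
    rw [hub, map_sum]
    refine Finset.sum_congr rfl fun p _ => ?_
    rw [LinearMap.lTensor_tmul, hv p, tmul_sum]
  have hRa : (TensorProduct.assoc k H H H)
        ((Coalgebra.comul (R := k) (A := H)).rTensor H (Δ a))
      = ∑ i ∈ sa, ∑ j ∈ ta' i, w1 i j ⊗ₜ[k] (w2 i j ⊗ₜ[k] x2 i) := by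
    rw [hxa, map_sum, map_sum]
    refine Finset.sum_congr rfl fun i _ => ?_
    rw [LinearMap.rTensor_tmul, hw i, sum_tmul, map_sum]
    exact Finset.sum_congr rfl fun j _ => by rw [assoc_tmul]
  have hRb : (TensorProduct.assoc k H H H)
        ((Coalgebra.comul (R := k) (A := H)).rTensor H (Δ b))
      = ∑ p ∈ sb, ∑ q ∈ tb' p, z1 p q ⊗ₜ[k] (z2 p q ⊗ₜ[k] u2 p) := by
    rw [hub, map_sum, map_sum]
    refine Finset.sum_congr rfl fun p _ => ?_
    rw [LinearMap.rTensor_tmul, hz p, sum_tmul, map_sum]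
    exact Finset.sum_congr rfl fun q _ => by rw [assoc_tmul]
  -- the two evaluations agree by coassociativity
  have hkey : Np k H ((∑ i ∈ sa, ∑ j ∈ ta' i, w1 i j ⊗ₜ[k] (w2 i j ⊗ₜ[k] x2 i)) ⊗ₜ
        (∑ p ∈ sb, ∑ q ∈ tb' p, z1 p q ⊗ₜ[k] (z2 p q ⊗ₜ[k] u2 p)))
      = Np k H ((∑ i ∈ sa, ∑ j ∈ ta i, x1 i ⊗ₜ[k] (y1 i j ⊗ₜ[k] y2 i j)) ⊗ₜ
        (∑ p ∈ sb, ∑ q ∈ tb p, u1 p ⊗ₜ[k] (v1 p q ⊗ₜ[k] v2 p q))) := by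
    rw [← hLa, ← hLb, ← hRa, ← hRb, Coalgebra.coassoc_apply, Coalgebra.coassoc_apply]
  -- expand both sides into quadruple sums
  have expand : ∀ (A B : ℕ → Finset ℕ) (f1 f2 f3 g1 g2 g3 : ℕ → ℕ → H),
      Np k H ((∑ i ∈ sa, ∑ j ∈ A i, f1 i j ⊗ₜ[k] (f2 i j ⊗ₜ[k] f3 i j)) ⊗ₜ
        (∑ p ∈ sb, ∑ q ∈ B p, g1 p q ⊗ₜ[k] (g2 p q ⊗ₜ[k] g3 p q)))
      = ∑ i ∈ sa, ∑ j ∈ A i, ∑ p ∈ sb, ∑ q ∈ B p,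
          S' (f1 i j * g1 p q) * ((f2 i j * g2 p q) * (S' (g3 p q) * S' (f3 i j))) := by
    intro A B f1 f2 f3 g1 g2 g3
    rw [sum_tmul, map_sum]
    refine Finset.sum_congr rfl fun i _ => ?_
    rw [sum_tmul, map_sum]
    refine Finset.sum_congr rfl fun j _ => ?_
    rw [tmul_sum, map_sum]
    refine Finset.sum_congr rfl fun p _ => ?_
    rw [tmul_sum, map_sum]
    exact Finset.sum_congr rfl fun q _ => Np_tmul _ _ _ _ _ _
  rw [expand, expand] at hkey
  -- evaluate the L-side (RHS of hkey): equals S' (a * b)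
  have hL : ∑ i ∈ sa, ∑ j ∈ ta i, ∑ p ∈ sb, ∑ q ∈ tb p,
      S' (x1 i * u1 p) * ((y1 i j * v1 p q) * (S' (v2 p q) * S' (y2 i j)))
      = S' (a * b) := by
    have step1 : ∀ i ∈ sa, ∀ p ∈ sb, ∀ j ∈ ta i,
        ∑ q ∈ tb p, S' (x1 i * u1 p) * ((y1 i j * v1 p q) * (S' (v2 p q) * S' (y2 i j)))
        = Coalgebra.counit (R := k) (u2 p) •
            (S' (x1 i * u1 p) * (y1 i j * S' (y2 i j))) := by
      intro i _ p _ j _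
      have : ∀ q, (y1 i j * v1 p q) * (S' (v2 p q) * S' (y2 i j))
          = y1 i j * ((v1 p q * S' (v2 p q)) * S' (y2 i j)) := by
        intro q; rw [mul_assoc (y1 i j), mul_assoc (v1 p q)]
      simp only [this]
      rw [← Finset.mul_sum, ← Finset.mul_sum, ← Finset.sum_mul,
        antipode_right_sum _ (hv p), smul_mul_assoc, one_mul, mul_smul_comm,
        mul_smul_comm]
    calc ∑ i ∈ sa, ∑ j ∈ ta i, ∑ p ∈ sb, ∑ q ∈ tb p,
          S' (x1 i * u1 p) * ((y1 i j * v1 p q) * (S' (v2 p q) * S' (y2 i j)))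
        = ∑ i ∈ sa, ∑ p ∈ sb, ∑ j ∈ ta i, ∑ q ∈ tb p,
          S' (x1 i * u1 p) * ((y1 i j * v1 p q) * (S' (v2 p q) * S' (y2 i j))) := by
          exact Finset.sum_congr rfl fun i _ => Finset.sum_comm
      _ = ∑ i ∈ sa, ∑ p ∈ sb, (Coalgebra.counit (R := k) (u2 p) *
            Coalgebra.counit (R := k) (x2 i)) • S' (x1 i * u1 p) := by
          refine Finset.sum_congr rfl fun i hi => Finset.sum_congr rfl fun p hp => ?_
          rw [Finset.sum_congr rfl (step1 i hi p hp), ← Finset.smul_sum,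
            ← Finset.mul_sum, antipode_right_sum _ (hy i), mul_smul_comm,
            smul_smul, mul_one]
      _ = S' (∑ i ∈ sa, ∑ p ∈ sb, (Coalgebra.counit (R := k) (u2 p) *
            Coalgebra.counit (R := k) (x2 i)) • (x1 i * u1 p)) := by
          rw [map_sum]; refine Finset.sum_congr rfl fun i _ => ?_
          rw [map_sum]; exact Finset.sum_congr rfl fun p _ => (map_smul _ _ _).symm
      _ = S' ((∑ i ∈ sa, Coalgebra.counit (R := k) (x2 i) • x1 i) *
            (∑ p ∈ sb, Coalgebra.counit (R := k) (u2 p) • u1 p)) := by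
          rw [Finset.sum_mul_sum]
          congr 1
          refine Finset.sum_congr rfl fun i _ => Finset.sum_congr rfl fun p _ => ?_
          rw [smul_mul_smul_comm, mul_comm]
      _ = S' (a * b) := by rw [counit_right_sum a hxa, counit_right_sum b hub]
  -- evaluate the R-side (LHS of hkey): equals S' b * S' a
  have hR : ∑ i ∈ sa, ∑ j ∈ ta' i, ∑ p ∈ sb, ∑ q ∈ tb' p,
      S' (w1 i j * z1 p q) * ((w2 i j * z2 p q) * (S' (u2 p) * S' (x2 i)))
      = S' b * S' a := by
    calc ∑ i ∈ sa, ∑ j ∈ ta' i, ∑ p ∈ sb, ∑ q ∈ tb' p,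
          S' (w1 i j * z1 p q) * ((w2 i j * z2 p q) * (S' (u2 p) * S' (x2 i)))
        = ∑ i ∈ sa, ∑ p ∈ sb, ∑ j ∈ ta' i, ∑ q ∈ tb' p,
          (S' (w1 i j * z1 p q) * (w2 i j * z2 p q)) * (S' (u2 p) * S' (x2 i)) := by
          refine Finset.sum_congr rfl fun i _ => ?_
          rw [Finset.sum_comm]
          refine Finset.sum_congr rfl fun p _ => Finset.sum_congr rfl fun j _ =>
            Finset.sum_congr rfl fun q _ => by rw [← mul_assoc]
      _ = ∑ i ∈ sa, ∑ p ∈ sb, (Coalgebra.counit (R := k) (x1 i) *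
            Coalgebra.counit (R := k) (u1 p)) • (S' (u2 p) * S' (x2 i)) := by
          refine Finset.sum_congr rfl fun i _ => Finset.sum_congr rfl fun p _ => ?_
          simp only [← Finset.sum_mul]
          rw [show (∑ j ∈ ta' i, ∑ q ∈ tb' p, S' (w1 i j * z1 p q) * (w2 i j * z2 p q))
              = Coalgebra.counit (R := k) (x1 i * u1 p) • 1 from
            antipode_left_sum2 _ (comul_prod_sum _ _ (hw i) (hz p))]
          rw [smul_mul_assoc, one_mul, Bialgebra.counit_mul]
      _ = (∑ p ∈ sb, Coalgebra.counit (R := k) (u1 p) • S' (u2 p)) *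
            (∑ i ∈ sa, Coalgebra.counit (R := k) (x1 i) • S' (x2 i)) := by
          rw [Finset.sum_mul_sum, Finset.sum_comm]
          refine Finset.sum_congr rfl fun i _ => Finset.sum_congr rfl fun p _ => ?_
          rw [smul_mul_smul_comm, mul_comm]
      _ = S' b * S' a := by
          have key : ∀ (c : H) (s : Finset ℕ) (e f : ℕ → H),
              Δ c = ∑ i ∈ s, e i ⊗ₜ f i →
              ∑ i ∈ s, Coalgebra.counit (R := k) (e i) • S' (f i) = S' c := by
            intro c s e f h
            rw [← counit_left_sum c h, map_sum]
            exact Finset.sum_congr rfl fun i _ => (map_smul _ _ _).symm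
          rw [key b sb u1 u2 hub, key a sa x1 x2 hxa]
  rw [hR, hL] at hkey
  exact hkey.symm


lemma Sinv_sum (Sinv : H →ₗ[k] H) (hS : ∀ h : H, Sinv (S' h) = h)
    (hS' : ∀ h : H, S' (Sinv h) = h)
    (x : H) {s : Finset ℕ} {c d : ℕ → H} (h : Δ x = ∑ j ∈ s, c j ⊗ₜ d j) :
    ∑ j ∈ s, Sinv (d j) * c j = ε x • 1 := by
  have h1 : S' (∑ j ∈ s, Sinv (d j) * c j) = ε x • 1 := by
    rw [map_sum]
    have e1 : ∀ j : ℕ, S' (Sinv (d j) * c j) = S' (c j) * d j := fun j => by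
      rw [antipode_mul', hS']
    simp only [e1]
    exact antipode_left_sum x h
  have h2 := congrArg Sinv h1
  rw [hS, map_smul] at h2
  have h3 : Sinv (1 : H) = 1 := by
    calc Sinv (1 : H) = Sinv (S' 1) := by rw [antipode_one']
    _ = 1 := hS 1
  rw [h3] at h2
  exact h2

end Helpers


/-- Let `M` be an algebra and a left `H`-comodule, and let
`π : H → M` be a surjective algebra homomorphism such that the action
`h · m := π(h) m` makes `M` a left-left anti-Yetter-Drinfeld module.  If
moreover `π(1⁽⁻¹⁾) 1⁽⁰⁾ = 1`, then `M` is stable. -/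
theorem stmt6 {k : Type} [Field k] {H : Type} [Ring H] [HopfAlgebra k H]
    (Sinv : H →ₗ[k] H)
    (hS : ∀ h : H, Sinv (HopfAlgebra.antipode (R := k) h) = h)
    (hS' : ∀ h : H, HopfAlgebra.antipode (R := k) (Sinv h) = h)
    {M : Type} [Ring M] [Algebra k M]
    (π : H →ₐ[k] M) (hsurj : Function.Surjective π)
    (coact : M →ₗ[k] H ⊗[k] M)
    (hcoact : IsLCoact (Coalgebra.comul (R := k)) (Coalgebra.counit (R := k)) coact)
    (hAYD : AYDll (Coalgebra.comul (R := k)) Sinv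
      ((LinearMap.mul k M) ∘ₗ π.toLinearMap) coact)
    (hone : ∀ (u : Finset ℕ) (e : ℕ → H) (m0 : ℕ → M),
      coact 1 = ∑ l ∈ u, e l ⊗ₜ m0 l → ∑ l ∈ u, π (e l) * m0 l = 1) :
    StableL ((LinearMap.mul k M) ∘ₗ π.toLinearMap) coact := by
  intro m u e m0 hrep
  simp only [LinearMap.coe_comp, Function.comp_apply, AlgHom.toLinearMap_apply,
    LinearMap.mul_apply']
  obtain ⟨g, rfl⟩ := hsurj m
  obtain ⟨s, a, b, hΔh⟩ := exists_rep (Coalgebra.comul (R := k) g)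
  choose t c d hbd using fun i => exists_rep (Coalgebra.comul (R := k) (b i))
  obtain ⟨u1, e1, n1, honerep⟩ := exists_rep (coact 1)
  have hAYD1 := hAYD g 1 s a b t c d u1 e1 n1 hΔh (fun i _ => hbd i) honerep
  have hact : ((LinearMap.mul k M) ∘ₗ π.toLinearMap) g 1 = π g := by
    simp [LinearMap.mul_apply']
  rw [hact] at hAYD1
  -- the multiplication-after-π map
  set ψ : H ⊗[k] M →ₗ[k] M :=
    (LinearMap.mul' k M) ∘ₗ (TensorProduct.map π.toLinearMap LinearMap.id) with hψ
  have ψ_tmul : ∀ (x : H) (n : M), ψ (x ⊗ₜ n) = π x * n := by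
    intro x n; simp [hψ]
  have lhs_eq : ∑ l ∈ u, π (e l) * m0 l = ψ (coact (π g)) := by
    rw [hrep, map_sum]
    exact Finset.sum_congr rfl fun l _ => (ψ_tmul _ _).symm
  rw [lhs_eq, hAYD1]
  -- now compute
  have expand : ψ (∑ i ∈ s, ∑ j ∈ t i, ∑ l ∈ u1,
      (a i * e1 l * Sinv (d i j)) ⊗ₜ ((LinearMap.mul k M) ∘ₗ π.toLinearMap) (c i j) (n1 l))
      = ∑ i ∈ s, ∑ j ∈ t i, ∑ l ∈ u1,
        (π (a i) * π (e1 l)) * ((π (Sinv (d i j)) * π (c i j)) * n1 l) := by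
    rw [map_sum]
    refine Finset.sum_congr rfl fun i _ => ?_
    rw [map_sum]
    refine Finset.sum_congr rfl fun j _ => ?_
    rw [map_sum]
    refine Finset.sum_congr rfl fun l _ => ?_
    rw [ψ_tmul]
    simp only [LinearMap.coe_comp, Function.comp_apply, AlgHom.toLinearMap_apply,
      LinearMap.mul_apply', map_mul]
    rw [mul_assoc (π (a i) * π (e1 l)), ← mul_assoc (π (Sinv (d i j)))]
  rw [expand]
  calc ∑ i ∈ s, ∑ j ∈ t i, ∑ l ∈ u1,
        (π (a i) * π (e1 l)) * ((π (Sinv (d i j)) * π (c i j)) * n1 l)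
      = ∑ i ∈ s, ∑ l ∈ u1, ∑ j ∈ t i,
        (π (a i) * π (e1 l)) * ((π (Sinv (d i j)) * π (c i j)) * n1 l) := by
        exact Finset.sum_congr rfl fun i _ => Finset.sum_comm
    _ = ∑ i ∈ s, ∑ l ∈ u1, Coalgebra.counit (R := k) (b i) •
          ((π (a i) * π (e1 l)) * n1 l) := by
        refine Finset.sum_congr rfl fun i _ => Finset.sum_congr rfl fun l _ => ?_
        rw [← Finset.mul_sum, ← Finset.sum_mul]
        simp only [← map_mul]
        rw [← map_sum, Sinv_sum Sinv hS hS' (b i) (hbd i), map_smul, map_one,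
          smul_mul_assoc, one_mul, mul_smul_comm]
    _ = ∑ i ∈ s, Coalgebra.counit (R := k) (b i) • π (a i) := by
        refine Finset.sum_congr rfl fun i _ => ?_
        rw [← Finset.smul_sum]
        congr 1
        rw [show ∑ l ∈ u1, (π (a i) * π (e1 l)) * n1 l
            = π (a i) * ∑ l ∈ u1, π (e1 l) * n1 l by
          rw [Finset.mul_sum]; exact Finset.sum_congr rfl fun l _ => mul_assoc _ _ _]
        rw [hone u1 e1 n1 honerep, mul_one]
    _ = π g := by
        conv_rhs => rw [← counit_right_sum g hΔh]
        rw [map_sum]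
        exact Finset.sum_congr rfl fun i _ => (map_smul π.toLinearMap _ _).symm
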